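/- arXiv:0705.2725 — 3 statements merged into one kernel-verified Lean document; each statement's English description precedes it below -/
import Mathlib

section
/- Let F be a field of characteristic zero, and let Z ∈ F(ħ)[[u]] satisfy the C-recursion: for each i ∈ [n], Z(ħ, α_i, u) = ∑_d (∑_{r=−N_d}^{N_d} Z^r_{i;d} ħ^{−r}) u^d + ∑_{d≥1} ∑_{j≠i} C_i^j(d) u^d (ħ − (α_j−α_i)/d)^{−1} Z((α_j−α_i)/d, α_j, u). If u = e^t, then the transform Z̄ := (x + ħ d/dt) Z, evaluated at x = α_i, also satisfies a C-recursion of the same form (with the same coefficients C_i^j(d) and modified middle terms). -/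
/-- A family `Z`, given by its `u`-coefficients `Z hbar i d ∈ F` (functions of `hbar`),
is `C`-recursive if for each `i` and each degree `d`,
`Z(hbar,α_i,u) = ∑_d (∑_{r=−N_d}^{N_d} Z^r_{i;d} hbar^{−r}) u^d
  + ∑_{d'≥1} ∑_{j≠i} C_i^j(d') u^{d'} (hbar − (α_j−α_i)/d')⁻¹ Z((α_j−α_i)/d', α_j, u)`
holds coefficientwise for all admissible `hbar`. -/
def CRecursive {F : Type*} [Field F] {n : ℕ} (α : Fin n → F)
    (C : Fin n → Fin n → ℕ → F) (Z : F → Fin n → ℕ → F) : Prop :=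
  ∃ N : ℕ → ℕ, ∃ c : Fin n → ℕ → ℤ → F,
    ∀ (i : Fin n) (d : ℕ) (hbar : F), hbar ≠ 0 →
      (∀ j : Fin n, j ≠ i → ∀ d' : ℕ, 1 ≤ d' → d' ≤ d → hbar ≠ (α j - α i) / (d' : F)) →
      Z hbar i d = (∑ r ∈ Finset.Icc (-(N d : ℤ)) ((N d : ℤ)), c i d r * hbar ^ (-r))
        + ∑ d' ∈ Finset.Icc 1 d, ∑ j ∈ Finset.univ.erase i,
            C i j d' * (hbar - (α j - α i) / (d' : F))⁻¹ *
              Z ((α j - α i) / (d' : F)) j (d - d')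

/-- If `Z` is `C`-recursive, then with `u = e^t` the transform
`Z̄ = (x + hbar d/dt) Z` (evaluated at `x = α_i`), whose degree-`d` coefficient is
`α_i Z_d + hbar·d·Z_d`, is again `C`-recursive with the same coefficients `C_i^j(d)`. -/
theorem stmt_4 {F : Type*} [Field F] [CharZero F] {n : ℕ} (α : Fin n → F)
    (hα : Function.Injective α) (C : Fin n → Fin n → ℕ → F) (Z : F → Fin n → ℕ → F)
    (hZ : CRecursive α C Z) :
    CRecursive α C (fun hbar i d => α i * Z hbar i d + hbar * (d : F) * Z hbar i d) := by

  classical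
  obtain ⟨N, c, hrec⟩ := hZ
  refine ⟨fun d => N d + 1, fun i d r =>
      α i * (if r ∈ Finset.Icc (-(N d : ℤ)) (N d : ℤ) then c i d r else 0)
      + (d : F) * (if r + 1 ∈ Finset.Icc (-(N d : ℤ)) (N d : ℤ) then c i d (r + 1) else 0)
      + (if r = 0 then ∑ d' ∈ Finset.Icc 1 d, ∑ j ∈ Finset.univ.erase i,
          C i j d' * (d : F) * Z ((α j - α i) / (d' : F)) j (d - d') else 0), ?_⟩
  intro i d hbar h0 hne
  beta_reduce
  rw [hrec i d hbar h0 hne]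
  simp only [Nat.cast_add, Nat.cast_one]
  set S := ∑ r ∈ Finset.Icc (-(N d : ℤ)) ((N d : ℤ)), c i d r * hbar ^ (-r) with hSdef
  set E := ∑ d' ∈ Finset.Icc 1 d, ∑ j ∈ Finset.univ.erase i,
      C i j d' * (d : F) * Z ((α j - α i) / (d' : F)) j (d - d') with hEdef
  have hsub : Finset.Icc (-(N d : ℤ)) (N d : ℤ) ⊆ Finset.Icc (-((N d : ℤ) + 1)) ((N d : ℤ) + 1) := by
    apply Finset.Icc_subset_Icc <;> omega
  have hbig : ∑ r ∈ Finset.Icc (-((N d : ℤ) + 1)) ((N d : ℤ) + 1),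
      (α i * (if r ∈ Finset.Icc (-(N d : ℤ)) (N d : ℤ) then c i d r else 0)
      + (d : F) * (if r + 1 ∈ Finset.Icc (-(N d : ℤ)) (N d : ℤ) then c i d (r + 1) else 0)
      + (if r = 0 then E else 0)) * hbar ^ (-r)
      = α i * S + hbar * (d : F) * S + E := by
    simp only [add_mul, Finset.sum_add_distrib]
    congr 1
    · congr 1
      · -- first sum = α i * S
        rw [hSdef, Finset.mul_sum]
        rw [← Finset.sum_subset hsub]
        · apply Finset.sum_congr rfl
          intro r hr
          rw [if_pos hr]; ring
        · intro r _ hr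
          rw [if_neg hr]; ring_nf
      · -- second sum = hbar * d * S
        have hM : Finset.Icc (-(N d : ℤ) - 1) ((N d : ℤ) - 1) ⊆
            Finset.Icc (-((N d : ℤ) + 1)) ((N d : ℤ) + 1) := by
          apply Finset.Icc_subset_Icc <;> omega
        rw [← Finset.sum_subset hM]
        · rw [hSdef, Finset.mul_sum]
          apply Finset.sum_nbij' (fun r => r + 1) (fun r => r - 1)
          · intro r hr; simp only [Finset.mem_Icc] at hr ⊢; omega
          · intro r hr; simp only [Finset.mem_Icc] at hr ⊢; omega
          · intro r _; ring
          · intro r _; ring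
          · intro r hr
            have hmem : r + 1 ∈ Finset.Icc (-(N d : ℤ)) (N d : ℤ) := by
              simp only [Finset.mem_Icc] at hr ⊢; omega
            rw [if_pos hmem]
            have : hbar ^ (-(r + 1) + 1) = hbar ^ (-(r+1)) * hbar := by
              rw [zpow_add₀ h0, zpow_one]
            rw [show (-r) = -(r+1) + 1 by ring, this]
            ring
        · intro r hrB hrM
          have : r + 1 ∉ Finset.Icc (-(N d : ℤ)) (N d : ℤ) := by
            simp only [Finset.mem_Icc] at hrB hrM ⊢; omega
          rw [if_neg this]; ring_nf
    · -- third sum = E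
      have h0mem : (0 : ℤ) ∈ Finset.Icc (-((N d : ℤ) + 1)) ((N d : ℤ) + 1) := by
        simp only [Finset.mem_Icc]; omega
      rw [Finset.sum_eq_single 0]
      · simp
      · intro r _ hr; rw [if_neg hr]; ring
      · intro h; exact absurd h0mem h
  rw [hbig]
  set T := ∑ d' ∈ Finset.Icc 1 d, ∑ j ∈ Finset.univ.erase i,
      C i j d' * (hbar - (α j - α i) / (d' : F))⁻¹ * Z ((α j - α i) / (d' : F)) j (d - d')
    with hTdef
  have hterm : ∀ d' ∈ Finset.Icc 1 d, ∀ j ∈ Finset.univ.erase i,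
      α i * (C i j d' * (hbar - (α j - α i) / (d' : F))⁻¹ * Z ((α j - α i) / (d' : F)) j (d - d'))
      + hbar * (d : F) * (C i j d' * (hbar - (α j - α i) / (d' : F))⁻¹ * Z ((α j - α i) / (d' : F)) j (d - d'))
      = C i j d' * (hbar - (α j - α i) / (d' : F))⁻¹ *
          (α j * Z ((α j - α i) / (d' : F)) j (d - d')
            + (α j - α i) / (d' : F) * ((d - d' : ℕ) : F) * Z ((α j - α i) / (d' : F)) j (d - d'))
      + C i j d' * (d : F) * Z ((α j - α i) / (d' : F)) j (d - d') := by
    intro d' hd' j hj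
    simp only [Finset.mem_Icc] at hd'
    simp only [Finset.mem_erase] at hj
    have hd'0 : (d' : F) ≠ 0 := Nat.cast_ne_zero.mpr (by omega)
    have hden : hbar - (α j - α i) / (d' : F) ≠ 0 :=
      sub_ne_zero.mpr (hne j hj.1 d' hd'.1 hd'.2)
    have hcast : ((d - d' : ℕ) : F) = (d : F) - (d' : F) := by
      push_cast [Nat.cast_sub hd'.2]; ring
    have hc : (α j - α i) / (d' : F) * (d' : F) = α j - α i := div_mul_cancel₀ _ hd'0
    have hz : (hbar - (α j - α i) / (d' : F))⁻¹ * (hbar - (α j - α i) / (d' : F)) = 1 :=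
      inv_mul_cancel₀ hden
    rw [hcast]
    linear_combination (C i j d' * Z ((α j - α i) / (d' : F)) j (d - d') * (d : F)) * hz
      + (C i j d' * (hbar - (α j - α i) / (d' : F))⁻¹ *
          Z ((α j - α i) / (d' : F)) j (d - d')) * hc
  have hTT : α i * T + hbar * (d : F) * T =
      (∑ d' ∈ Finset.Icc 1 d, ∑ j ∈ Finset.univ.erase i,
        C i j d' * (hbar - (α j - α i) / (d' : F))⁻¹ *
          (α j * Z ((α j - α i) / (d' : F)) j (d - d')
            + (α j - α i) / (d' : F) * ((d - d' : ℕ) : F) * Z ((α j - α i) / (d' : F)) j (d - d')))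
      + E := by
    rw [hTdef, hEdef, Finset.mul_sum, Finset.mul_sum, ← Finset.sum_add_distrib,
      ← Finset.sum_add_distrib]
    refine Finset.sum_congr rfl fun d' hd' => ?_
    rw [Finset.mul_sum, Finset.mul_sum, ← Finset.sum_add_distrib, ← Finset.sum_add_distrib]
    exact Finset.sum_congr rfl fun j hj => hterm d' hd' j hj
  linear_combination hTT
end

section
/- Let F be a field of characteristic zero, let Z(ħ,α_i,u) ∈ F(ħ)[[u]] (for i ∈ [n]) be C-recursive, and let f ∈ F[ħ] be a polynomial in ħ. Then the family Z̄(ħ,α_i,u) := f(ħ)·Z(ħ,α_i,u) is again C-recursive with the same recursion coefficients C_i^j(d). -/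
open Finset Polynomial

private lemma laurent_mul {F : Type*} [Field F] (x : F) (hx : x ≠ 0) (D N : ℕ)
    (f : Polynomial F) (hf : f.natDegree ≤ D) (g : ℤ → F) :
    f.eval x * ∑ r ∈ Finset.Icc (-(N : ℤ)) (N : ℤ), g r * x ^ (-r)
      = ∑ r ∈ Finset.Icc (-((N + D : ℕ) : ℤ)) ((N + D : ℕ) : ℤ),
          (∑ s ∈ Finset.range (D + 1),
            if (r + (s : ℤ)) ∈ Finset.Icc (-(N : ℤ)) (N : ℤ) then
              f.coeff s * g (r + s) else 0) * x ^ (-r) := by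
  rw [eval_eq_sum_range' (lt_of_le_of_lt hf (Nat.lt_succ_self D)), Finset.sum_mul_sum]
  conv_rhs => simp only [Finset.sum_mul]
  conv_rhs => rw [Finset.sum_comm]
  refine Finset.sum_congr rfl fun s hs => ?_
  have hsD : (s : ℤ) ≤ (D : ℤ) := by
    have := Finset.mem_range.mp hs; exact_mod_cast Nat.lt_succ_iff.mp this
  have hsub : Finset.Icc (-(N : ℤ) - s) ((N : ℤ) - s)
      ⊆ Finset.Icc (-((N + D : ℕ) : ℤ)) ((N + D : ℕ) : ℤ) := by
    intro r hr
    simp only [Finset.mem_Icc] at *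
    push_cast
    omega
  rw [← Finset.sum_subset hsub (fun r hr hr' => ?_)]
  · have hmap : Finset.Icc (-(N : ℤ) - s) ((N : ℤ) - s)
        = (Finset.Icc (-(N : ℤ)) (N : ℤ)).map (addRightEmbedding (-(s : ℤ))) := by
      rw [Finset.map_add_right_Icc]; congr 1 <;> ring
    rw [hmap, Finset.sum_map]
    refine Finset.sum_congr rfl fun r hr => ?_
    simp only [addRightEmbedding_apply]
    have hmem : (r + -(s : ℤ)) + (s : ℤ) ∈ Finset.Icc (-(N : ℤ)) (N : ℤ)  := by
      simpa using hr
    rw [if_pos hmem]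
    have : (r + -(s:ℤ)) + (s:ℤ) = r := by ring
    rw [this]
    rw [show -(r + -(s:ℤ)) = (s:ℤ) + (-r) by ring, zpow_add₀ hx, zpow_natCast]
    ring
  · have : r + (s : ℤ) ∉ Finset.Icc (-(N : ℤ)) (N : ℤ) := by
      simp only [Finset.mem_Icc] at *
      omega
    rw [if_neg this, zero_mul]

private lemma poly_as_laurent {F : Type*} [Field F] (x : F) (hx : x ≠ 0) (M : ℕ)
    (p : Polynomial F) (hp : p.natDegree ≤ M) :
    p.eval x = ∑ r ∈ Finset.Icc (-(M : ℤ)) (M : ℤ),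
        (if r ≤ 0 then p.coeff (-r).toNat else 0) * x ^ (-r) := by
  have hsub : Finset.Icc (-(M : ℤ)) 0 ⊆ Finset.Icc (-(M : ℤ)) (M : ℤ) := by
    intro r hr; simp only [Finset.mem_Icc] at *; omega
  rw [← Finset.sum_subset hsub (fun r hr hr' => ?_)]
  · rw [eval_eq_sum_range' (lt_of_le_of_lt hp (Nat.lt_succ_self M))]
    refine Finset.sum_nbij' (fun t => -(t : ℤ)) (fun r => (-r).toNat) ?_ ?_ ?_ ?_ ?_
    · intro t ht; simp only [Finset.mem_range, Finset.mem_Icc] at *; omega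
    · intro r hr; simp only [Finset.mem_range, Finset.mem_Icc] at *; omega
    · intro t ht; simp
    · intro r hr; simp only [Finset.mem_Icc] at hr
      show -(((-r).toNat : ℤ)) = r
      omega
    · intro t ht
      rw [if_pos (by omega : -(t:ℤ) ≤ 0)]
      simp only [neg_neg, Int.toNat_natCast, zpow_natCast]
  · have : ¬ (r ≤ 0) := by simp only [Finset.mem_Icc] at *; omega
    rw [if_neg this, zero_mul]

/-- If `Z` is `C`-recursive and `f ∈ F[hbar]`, then `Z̄ = f(hbar)·Z` is again `C`-recursive
with the same recursion coefficients `C_i^j(d)`. -/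
theorem stmt_5 {F : Type*} [Field F] [CharZero F] {n : ℕ} (α : Fin n → F)
    (hα : Function.Injective α) (C : Fin n → Fin n → ℕ → F) (Z : F → Fin n → ℕ → F)
    (hZ : CRecursive α C Z) (f : Polynomial F) :
    CRecursive α C (fun hbar i d => Polynomial.eval hbar f * Z hbar i d) := by
  obtain ⟨N, c, hrec⟩ := hZ
  set D := f.natDegree with hD
  set q : Fin n → Fin n → ℕ → Polynomial F := fun i j d' =>
    f /ₘ (X - Polynomial.C ((α j - α i) / (d' : F))) with hq
  refine ⟨fun d => N d + D, fun i d r =>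
    (∑ s ∈ Finset.range (D + 1),
        if (r + (s : ℤ)) ∈ Finset.Icc (-(N d : ℤ)) (N d : ℤ) then
          f.coeff s * c i d (r + s) else 0)
    + ∑ d' ∈ Finset.Icc 1 d, ∑ j ∈ Finset.univ.erase i,
        (if r ≤ 0 then
          C i j d' * (q i j d').coeff (-r).toNat * Z ((α j - α i) / (d' : F)) j (d - d')
        else 0), ?_⟩
  intro i d x hx hadm
  have hrec' := hrec i d x hx hadm
  simp only
  rw [hrec', mul_add]
  have hqdeg : ∀ (j : Fin n) (d' : ℕ), (q i j d').natDegree ≤ D := fun j d' => by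
    rw [hq]
    simp only
    rw [natDegree_divByMonic f (monic_X_sub_C _)]
    omega
  have hkey : ∀ (j : Fin n) (d' : ℕ), f.eval x = (x - (α j - α i) / (d' : F)) * (q i j d').eval x
      + f.eval ((α j - α i) / (d' : F)) := fun j d' => by
    conv_lhs => rw [← modByMonic_add_div f (X - Polynomial.C ((α j - α i) / (d' : F)))]
    rw [modByMonic_X_sub_C_eq_C_eval]
    simp only [hq, eval_add, eval_mul, eval_sub, eval_X, eval_C]
    ring
  rw [Finset.sum_congr rfl (fun r _ => add_mul _ _ _), Finset.sum_add_distrib]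
  rw [← laurent_mul x hx D (N d) f le_rfl (c i d)]
  rw [add_assoc]
  congr 1
  -- goal: f(x) * ∑∑ C inv Z = ∑_r B r x^{-r} + ∑∑ C inv (f(c) * Z c)
  have hBsum : (∑ r ∈ Finset.Icc (-((N d + D : ℕ) : ℤ)) ((N d + D : ℕ) : ℤ),
        (∑ d' ∈ Finset.Icc 1 d, ∑ j ∈ Finset.univ.erase i,
          (if r ≤ 0 then
            C i j d' * (q i j d').coeff (-r).toNat * Z ((α j - α i) / (d' : F)) j (d - d')
          else 0)) * x ^ (-r))
      = ∑ d' ∈ Finset.Icc 1 d, ∑ j ∈ Finset.univ.erase i,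
          C i j d' * (q i j d').eval x * Z ((α j - α i) / (d' : F)) j (d - d') := by
    have step1 : ∀ r : ℤ, (∑ d' ∈ Finset.Icc 1 d, ∑ j ∈ Finset.univ.erase i,
          (if r ≤ 0 then
            C i j d' * (q i j d').coeff (-r).toNat * Z ((α j - α i) / (d' : F)) j (d - d')
          else 0)) * x ^ (-r)
        = ∑ d' ∈ Finset.Icc 1 d, ∑ j ∈ Finset.univ.erase i,
            C i j d' * ((if r ≤ 0 then (q i j d').coeff (-r).toNat else 0) * x ^ (-r))
              * Z ((α j - α i) / (d' : F)) j (d - d') := fun r => by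
      rw [Finset.sum_mul]
      refine Finset.sum_congr rfl fun d' _ => ?_
      rw [Finset.sum_mul]
      refine Finset.sum_congr rfl fun j _ => ?_
      by_cases h : r ≤ 0 <;> simp only [h, if_true, if_false, ite_true, ite_false] <;> ring
    rw [Finset.sum_congr rfl fun r _ => step1 r, Finset.sum_comm]
    refine Finset.sum_congr rfl fun d' _ => ?_
    rw [Finset.sum_comm]
    refine Finset.sum_congr rfl fun j _ => ?_
    have hpull : ∑ r ∈ Finset.Icc (-((N d + D : ℕ) : ℤ)) ((N d + D : ℕ) : ℤ),
          C i j d' * ((if r ≤ 0 then ((q i j d').coeff (-r).toNat : F) else 0) * x ^ (-r))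
            * Z ((α j - α i) / (d' : F)) j (d - d')
        = C i j d' * (∑ r ∈ Finset.Icc (-((N d + D : ℕ) : ℤ)) ((N d + D : ℕ) : ℤ),
            (if r ≤ 0 then ((q i j d').coeff (-r).toNat : F) else 0) * x ^ (-r))
            * Z ((α j - α i) / (d' : F)) j (d - d') := by
      rw [Finset.mul_sum, Finset.sum_mul]
    rw [hpull, ← poly_as_laurent x hx (N d + D) (q i j d') (le_trans (hqdeg j d') (by omega))]
  rw [hBsum, Finset.mul_sum, ← Finset.sum_add_distrib]
  refine Finset.sum_congr rfl fun d' hd' => ?_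
  rw [Finset.mul_sum, ← Finset.sum_add_distrib]
  refine Finset.sum_congr rfl fun j hj => ?_
  have hd'1 : 1 ≤ d' := (Finset.mem_Icc.mp hd').1
  have hd'2 : d' ≤ d := (Finset.mem_Icc.mp hd').2
  have hji : j ≠ i := Finset.ne_of_mem_erase hj
  have hxc : x - (α j - α i) / (d' : F) ≠ 0 :=
    sub_ne_zero.mpr (hadm j hji d' hd'1 hd'2)
  rw [hkey j d']
  field_simp
end

section
/- Let F be a field of characteristic zero, α₁,…,αₙ distinct in F, and let f ∈ F[u] with f(0) = 0. If Z(ħ,α_i,u) ∈ F(ħ)[[u]] is C-recursive, then Z̄(ħ,α_i,u) := e^{f(u)/ħ} Z(ħ,α_i,u) is also C-recursive with the same coefficients C_i^j(d). The key fact needed is that (e^{f(u)/ħ} − e^{f(u)/c})/(ħ − c) lies in F[ħ,ħ^{−1}][[u]] for any nonzero c ∈ F. -/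
/-- The `u^m`-coefficient of the formal exponential `e^{f(u)/hbar}` (for `f ∈ F[u]`
with `f(0) = 0`): `∑_{k≤m} [u^m](f^k) / (k! hbar^k)`. -/
noncomputable def expCoeff {F : Type*} [Field F] (f : Polynomial F) (hbar : F) (m : ℕ) : F :=
  ∑ k ∈ Finset.range (m + 1),
    (f ^ k).coeff m * ((Nat.factorial k : F))⁻¹ * (hbar⁻¹) ^ k

/-- Evaluation of an element of `AddMonoidAlgebra F ℤ` (a Laurent polynomial) at a unit. -/
noncomputable def evalAM {F : Type*} [Field F] (u : Fˣ) : AddMonoidAlgebra F ℤ →ₐ[F] F :=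
  AddMonoidAlgebra.lift F F ℤ ((Units.coeHom F).comp (zpowersHom Fˣ u))

theorem evalAM_single {F : Type*} [Field F] (u : Fˣ) (r : ℤ) (a : F) :
    evalAM u (AddMonoidAlgebra.single r a) = a * (u : F) ^ r := by
  rw [evalAM, AddMonoidAlgebra.lift_single]
  simp only [MonoidHom.comp_apply, zpowersHom_apply, Units.coeHom_apply, smul_eq_mul,
    Units.val_zpow_eq_zpow_val]
  rfl

theorem evalAM_eq_sum {F : Type*} [Field F] (u : Fˣ) (Q : AddMonoidAlgebra F ℤ) (S : Finset ℤ)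
    (hS : Q.coeff.support ⊆ S) : evalAM u Q = ∑ r ∈ S, Q.coeff r * (u : F) ^ r := by
  conv_lhs => rw [← AddMonoidAlgebra.sum_coeff_single Q]
  rw [Finsupp.sum, map_sum, Finset.sum_subset hS]
  · exact Finset.sum_congr rfl fun r _ => evalAM_single u r (Q.coeff r)
  · intro r _ hr
    rw [Finsupp.notMem_support_iff.mp hr, evalAM_single, zero_mul]

/-- Laurent-polynomial incarnation of `expCoeff`. -/
noncomputable def Ep {F : Type*} [Field F] (f : Polynomial F) (m : ℕ) : AddMonoidAlgebra F ℤ :=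
  ∑ k ∈ Finset.range (m + 1),
    AddMonoidAlgebra.single (-(k : ℤ)) ((f ^ k).coeff m * ((Nat.factorial k : F))⁻¹)

/-- Laurent-polynomial incarnation of `(E(hbar,m) - E(c0,m))/(hbar - c0)`. -/
noncomputable def Gp {F : Type*} [Field F] (f : Polynomial F) (c0 : F) (m : ℕ) :
    AddMonoidAlgebra F ℤ :=
  ∑ k ∈ Finset.range (m + 1), ∑ t ∈ Finset.range k,
    AddMonoidAlgebra.single ((t : ℤ) - (k : ℤ))
      (-((f ^ k).coeff m * ((Nat.factorial k : F))⁻¹ * c0 ^ (-1 - (t : ℤ))))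

/-- Laurent-polynomial incarnation of the local Laurent part of `Z`. -/
noncomputable def Lp {F : Type*} [Field F] {n : ℕ} (N : ℕ → ℕ) (c : Fin n → ℕ → ℤ → F)
    (i : Fin n) (m : ℕ) : AddMonoidAlgebra F ℤ :=
  ∑ r ∈ Finset.Icc (-(N m : ℤ)) ((N m : ℤ)), AddMonoidAlgebra.single (-r) (c i m r)

theorem eval_Ep {F : Type*} [Field F] (u : Fˣ) (f : Polynomial F) (m : ℕ) :
    evalAM u (Ep f m) = expCoeff f (u : F) m := by
  rw [Ep, map_sum, expCoeff]
  refine Finset.sum_congr rfl fun k _ => ?_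
  rw [evalAM_single, zpow_neg, zpow_natCast, ← inv_pow]

theorem eval_Lp {F : Type*} [Field F] {n : ℕ} (u : Fˣ) (N : ℕ → ℕ) (c : Fin n → ℕ → ℤ → F)
    (i : Fin n) (m : ℕ) :
    evalAM u (Lp N c i m) =
      ∑ r ∈ Finset.Icc (-(N m : ℤ)) ((N m : ℤ)), c i m r * (u : F) ^ (-r) := by
  rw [Lp, map_sum]
  exact Finset.sum_congr rfl fun r _ => evalAM_single u (-r) (c i m r)

theorem key_geom {F : Type*} [Field F] (x y : F) (hx : x ≠ 0) (hy : y ≠ 0) (k : ℕ) :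
    (x - y) * ∑ t ∈ Finset.range k, x ^ ((t : ℤ) - (k : ℤ)) * y ^ (-1 - (t : ℤ)) =
      y ^ (-(k : ℤ)) - x ^ (-(k : ℤ)) := by
  have h1 : ∀ t ∈ Finset.range k, x ^ ((t : ℤ) - (k : ℤ)) * y ^ (-1 - (t : ℤ))
      = (x ^ t * y ^ (k - 1 - t)) * (x ^ k * y ^ k)⁻¹ := by
    intro t ht
    rw [Finset.mem_range] at ht
    have e1 : ((t : ℤ) - (k : ℤ)) = (t : ℤ) + (-(k : ℤ)) := by ring
    have e2 : (-1 - (t : ℤ)) = ((k : ℤ) - 1 - (t : ℤ)) + (-(k : ℤ)) := by ring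
    have e3 : ((k : ℤ) - 1 - (t : ℤ)) = ((k - 1 - t : ℕ) : ℤ) := by omega
    rw [e1, e2, zpow_add₀ hx, zpow_add₀ hy, e3]
    simp only [zpow_neg, zpow_natCast, mul_inv]
    ring
  rw [Finset.sum_congr rfl h1, ← Finset.sum_mul, mul_comm (x - y), mul_assoc,
    mul_comm ((x ^ k * y ^ k)⁻¹) (x - y), ← mul_assoc, geom_sum₂_mul]
  simp only [zpow_neg, zpow_natCast]
  have hxk : x ^ k ≠ 0 := pow_ne_zero _ hx
  have hyk : y ^ k ≠ 0 := pow_ne_zero _ hy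
  have h2 : (y ^ k)⁻¹ * (x ^ k * y ^ k) = x ^ k := by
    rw [mul_comm (x ^ k), ← mul_assoc, inv_mul_cancel₀ hyk, one_mul]
  have h3 : (x ^ k)⁻¹ * (x ^ k * y ^ k) = y ^ k := by
    rw [← mul_assoc, inv_mul_cancel₀ hxk, one_mul]
  rw [← div_eq_mul_inv, div_eq_iff (mul_ne_zero hxk hyk), sub_mul, h2, h3]

theorem eval_Gp {F : Type*} [Field F] (u : Fˣ) (f : Polynomial F) (c0 : F) (hc0 : c0 ≠ 0)
    (m : ℕ) :
    ((u : F) - c0) * evalAM u (Gp f c0 m) = expCoeff f (u : F) m - expCoeff f c0 m := by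
  have hu : (u : F) ≠ 0 := u.ne_zero
  rw [Gp, map_sum, Finset.mul_sum, expCoeff, expCoeff, ← Finset.sum_sub_distrib]
  refine Finset.sum_congr rfl fun k _ => ?_
  set a : F := (f ^ k).coeff m * ((Nat.factorial k : F))⁻¹ with ha
  have h1 : evalAM u (∑ t ∈ Finset.range k, AddMonoidAlgebra.single ((t : ℤ) - (k : ℤ))
      (-(a * c0 ^ (-1 - (t : ℤ))))) =
      -a * ∑ t ∈ Finset.range k, (u : F) ^ ((t : ℤ) - (k : ℤ)) * c0 ^ (-1 - (t : ℤ)) := by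
    rw [map_sum, Finset.mul_sum]
    refine Finset.sum_congr rfl fun t _ => ?_
    rw [evalAM_single]
    ring
  rw [h1, ← mul_assoc, mul_comm ((u : F) - c0) (-a), mul_assoc, key_geom _ _ hu hc0]
  have h2 : ((u : F)⁻¹) ^ k = (u : F) ^ (-(k : ℤ)) := by rw [zpow_neg, zpow_natCast, inv_pow]
  have h3 : (c0⁻¹) ^ k = c0 ^ (-(k : ℤ)) := by rw [zpow_neg, zpow_natCast, inv_pow]
  rw [← h2, ← h3]
  ring

/-- Triangle sum swap. -/
theorem tri_swap {M : Type*} [AddCommMonoid M] (d : ℕ) (X : ℕ → ℕ → M) :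
    ∑ d' ∈ Finset.range (d + 1), ∑ e ∈ Finset.Icc 1 (d - d'), X d' e
      = ∑ e ∈ Finset.Icc 1 d, ∑ d' ∈ Finset.range (d - e + 1), X d' e := by
  rw [Finset.sum_sigma', Finset.sum_sigma']
  refine Finset.sum_nbij' (fun p => ⟨p.2, p.1⟩) (fun p => ⟨p.2, p.1⟩) ?_ ?_ ?_ ?_ ?_ <;>
    simp only [Finset.mem_sigma, Finset.mem_range, Finset.mem_Icc] <;>
    (intro p hp; first | omega | trivial)

/-- The full Laurent part of `e^{f/hbar} Z` at index `i`, degree `d`. -/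
noncomputable def Pfull {F : Type*} [Field F] {n : ℕ} (α : Fin n → F)
    (C : Fin n → Fin n → ℕ → F) (Z : F → Fin n → ℕ → F) (N : ℕ → ℕ)
    (c : Fin n → ℕ → ℤ → F) (f : Polynomial F) (i : Fin n) (d : ℕ) : AddMonoidAlgebra F ℤ :=
  (∑ d' ∈ Finset.range (d + 1), Ep f d' * Lp N c i (d - d'))
    + ∑ e ∈ Finset.Icc 1 d, ∑ j ∈ Finset.univ.erase i, ∑ d' ∈ Finset.range (d - e + 1),
        (C i j e * Z ((α j - α i) / (e : F)) j (d - e - d')) • Gp f ((α j - α i) / (e : F)) d'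

/-- If `Z` is `C`-recursive and `f ∈ F[u]` with `f(0) = 0`, then
`Z̄ = e^{f(u)/hbar}·Z` (a Cauchy product of `u`-coefficients) is again `C`-recursive
with the same coefficients `C_i^j(d)`. -/
theorem stmt_6 {F : Type*} [Field F] [CharZero F] {n : ℕ} (α : Fin n → F)
    (hα : Function.Injective α) (C : Fin n → Fin n → ℕ → F) (Z : F → Fin n → ℕ → F)
    (hZ : CRecursive α C Z) (f : Polynomial F) (hf : f.coeff 0 = 0) :
    CRecursive α C (fun hbar i d =>
      ∑ d' ∈ Finset.range (d + 1), expCoeff f hbar d' * Z hbar i (d - d')) := by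
  classical
  obtain ⟨N, c, hc⟩ := hZ
  refine ⟨fun d => Finset.univ.sup fun i' : Fin n =>
      (Pfull α C Z N c f i' d).coeff.support.sup Int.natAbs,
    fun i d r => (Pfull α C Z N c f i d).coeff (-r), ?_⟩
  intro i d hbar hh hadm
  beta_reduce
  set u : Fˣ := Units.mk0 hbar hh with hu
  have huv : (u : F) = hbar := rfl
  set Q : AddMonoidAlgebra F ℤ := Pfull α C Z N c f i d with hQ
  set M : ℕ := Finset.univ.sup fun i' : Fin n =>
      (Pfull α C Z N c f i' d).coeff.support.sup Int.natAbs with hMdef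
  -- Step A : the Laurent part is the evaluation of Q
  have hsupp : Q.coeff.support ⊆ Finset.Icc (-(M : ℤ)) (M : ℤ) := by
    intro r hr
    have h1 : r.natAbs ≤ (Pfull α C Z N c f i d).coeff.support.sup Int.natAbs := Finset.le_sup hr
    have h2 : (Pfull α C Z N c f i d).coeff.support.sup Int.natAbs ≤ M :=
      Finset.le_sup (f := fun i' : Fin n => (Pfull α C Z N c f i' d).coeff.support.sup Int.natAbs)
        (Finset.mem_univ i)
    rw [Finset.mem_Icc]
    omega
  have hA : (∑ r ∈ Finset.Icc (-(M : ℤ)) ((M : ℤ)), Q.coeff (-r) * hbar ^ (-r)) = evalAM u Q := by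
    rw [evalAM_eq_sum u Q _ hsupp]
    refine Finset.sum_nbij' (fun r => -r) (fun r => -r) ?_ ?_ ?_ ?_ ?_
    · intro r hr; simp only [Finset.mem_Icc] at hr ⊢; omega
    · intro r hr; simp only [Finset.mem_Icc] at hr ⊢; omega
    · intro r _; simp
    · intro r _; simp
    · intro r _; rw [huv]
  -- the recursion applied to each coefficient of Z
  have hrec : ∀ d' ∈ Finset.range (d + 1),
      Z hbar i (d - d') = (∑ r ∈ Finset.Icc (-(N (d - d') : ℤ)) ((N (d - d') : ℤ)),
          c i (d - d') r * hbar ^ (-r))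
        + ∑ e ∈ Finset.Icc 1 (d - d'), ∑ j ∈ Finset.univ.erase i,
            C i j e * (hbar - (α j - α i) / (e : F))⁻¹ *
              Z ((α j - α i) / (e : F)) j (d - d' - e) := by
    intro d' _
    exact hc i (d - d') hbar hh fun j hj e he1 he2 =>
      hadm j hj e he1 (le_trans he2 (Nat.sub_le d d'))
  -- evaluation of Q
  have hPeval : evalAM u Q = (∑ d' ∈ Finset.range (d + 1), expCoeff f hbar d' *
        (∑ r ∈ Finset.Icc (-(N (d - d') : ℤ)) ((N (d - d') : ℤ)),
          c i (d - d') r * hbar ^ (-r)))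
      + ∑ e ∈ Finset.Icc 1 d, ∑ j ∈ Finset.univ.erase i, ∑ d' ∈ Finset.range (d - e + 1),
          (C i j e * Z ((α j - α i) / (e : F)) j (d - e - d')) *
            evalAM u (Gp f ((α j - α i) / (e : F)) d') := by
    rw [hQ, Pfull, map_add, map_sum]
    congr 1
    · refine Finset.sum_congr rfl fun d' _ => ?_
      rw [map_mul, eval_Ep, eval_Lp, huv]
    · rw [map_sum]
      refine Finset.sum_congr rfl fun e _ => ?_
      rw [map_sum]
      refine Finset.sum_congr rfl fun j _ => ?_
      rw [map_sum]
      refine Finset.sum_congr rfl fun d' _ => ?_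
      rw [map_smul, smul_eq_mul]
  -- per-term identity
  have hterm : ∀ e ∈ Finset.Icc 1 d, ∀ j ∈ Finset.univ.erase i, ∀ d' ∈ Finset.range (d - e + 1),
      expCoeff f hbar d' * (C i j e * (hbar - (α j - α i) / (e : F))⁻¹ *
          Z ((α j - α i) / (e : F)) j (d - e - d'))
        = (C i j e * Z ((α j - α i) / (e : F)) j (d - e - d')) *
            evalAM u (Gp f ((α j - α i) / (e : F)) d')
          + C i j e * (hbar - (α j - α i) / (e : F))⁻¹ *
            (expCoeff f ((α j - α i) / (e : F)) d' *
              Z ((α j - α i) / (e : F)) j (d - e - d')) := by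
    intro e he j hj d' _
    rw [Finset.mem_Icc] at he
    rw [Finset.mem_erase] at hj
    have hq0 : (α j - α i) / (e : F) ≠ 0 :=
      div_ne_zero (sub_ne_zero.mpr fun hji => hj.1 (hα hji))
        (Nat.cast_ne_zero.mpr (by omega))
    have hne : hbar - (α j - α i) / (e : F) ≠ 0 :=
      sub_ne_zero.mpr (hadm j hj.1 e he.1 he.2)
    have hG := eval_Gp u f _ hq0 d'
    rw [huv] at hG
    have hGv : evalAM u (Gp f ((α j - α i) / (e : F)) d') =
        (hbar - (α j - α i) / (e : F))⁻¹ *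
          (expCoeff f hbar d' - expCoeff f ((α j - α i) / (e : F)) d') := by
      rw [inv_mul_eq_div, eq_div_iff hne, mul_comm]
      exact hG
    rw [hGv]
    ring
  -- main computation
  calc
    ∑ d' ∈ Finset.range (d + 1), expCoeff f hbar d' * Z hbar i (d - d')
      = ∑ d' ∈ Finset.range (d + 1), expCoeff f hbar d' *
          ((∑ r ∈ Finset.Icc (-(N (d - d') : ℤ)) ((N (d - d') : ℤ)),
            c i (d - d') r * hbar ^ (-r))
          + ∑ e ∈ Finset.Icc 1 (d - d'), ∑ j ∈ Finset.univ.erase i,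
              C i j e * (hbar - (α j - α i) / (e : F))⁻¹ *
                Z ((α j - α i) / (e : F)) j (d - d' - e)) :=
        Finset.sum_congr rfl fun d' hd' => by rw [hrec d' hd']
    _ = (∑ d' ∈ Finset.range (d + 1), expCoeff f hbar d' *
          (∑ r ∈ Finset.Icc (-(N (d - d') : ℤ)) ((N (d - d') : ℤ)),
            c i (d - d') r * hbar ^ (-r)))
        + ∑ d' ∈ Finset.range (d + 1), ∑ e ∈ Finset.Icc 1 (d - d'),
            ∑ j ∈ Finset.univ.erase i,
              expCoeff f hbar d' * (C i j e * (hbar - (α j - α i) / (e : F))⁻¹ *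
                Z ((α j - α i) / (e : F)) j (d - d' - e)) := by
        simp only [mul_add, Finset.mul_sum]
        rw [Finset.sum_add_distrib]
    _ = (∑ d' ∈ Finset.range (d + 1), expCoeff f hbar d' *
          (∑ r ∈ Finset.Icc (-(N (d - d') : ℤ)) ((N (d - d') : ℤ)),
            c i (d - d') r * hbar ^ (-r)))
        + ∑ e ∈ Finset.Icc 1 d, ∑ d' ∈ Finset.range (d - e + 1),
            ∑ j ∈ Finset.univ.erase i,
              expCoeff f hbar d' * (C i j e * (hbar - (α j - α i) / (e : F))⁻¹ *
                Z ((α j - α i) / (e : F)) j (d - d' - e)) := by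
        rw [tri_swap d (fun d' e => ∑ j ∈ Finset.univ.erase i,
          expCoeff f hbar d' * (C i j e * (hbar - (α j - α i) / (e : F))⁻¹ *
            Z ((α j - α i) / (e : F)) j (d - d' - e)))]
    _ = (∑ d' ∈ Finset.range (d + 1), expCoeff f hbar d' *
          (∑ r ∈ Finset.Icc (-(N (d - d') : ℤ)) ((N (d - d') : ℤ)),
            c i (d - d') r * hbar ^ (-r)))
        + ∑ e ∈ Finset.Icc 1 d, ∑ d' ∈ Finset.range (d - e + 1),
            ∑ j ∈ Finset.univ.erase i,
              expCoeff f hbar d' * (C i j e * (hbar - (α j - α i) / (e : F))⁻¹ *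
                Z ((α j - α i) / (e : F)) j (d - e - d')) := by
        refine congrArg _ (Finset.sum_congr rfl fun e _ => Finset.sum_congr rfl fun d' _ =>
          Finset.sum_congr rfl fun j _ => ?_)
        rw [Nat.sub_right_comm]
    _ = evalAM u Q + ∑ e ∈ Finset.Icc 1 d, ∑ j ∈ Finset.univ.erase i,
          C i j e * (hbar - (α j - α i) / (e : F))⁻¹ *
            ∑ d' ∈ Finset.range (d - e + 1),
              expCoeff f ((α j - α i) / (e : F)) d' *
                Z ((α j - α i) / (e : F)) j (d - e - d') := by
        rw [hPeval, add_assoc]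
        congr 1
        rw [← Finset.sum_add_distrib]
        refine Finset.sum_congr rfl fun e he => ?_
        conv_lhs => rw [Finset.sum_comm]
        rw [← Finset.sum_add_distrib]
        refine Finset.sum_congr rfl fun j hj => ?_
        rw [Finset.mul_sum, ← Finset.sum_add_distrib]
        refine Finset.sum_congr rfl fun d' hd' => ?_
        exact hterm e he j hj d' hd'
    _ = (∑ r ∈ Finset.Icc (-(M : ℤ)) ((M : ℤ)), Q.coeff (-r) * hbar ^ (-r))
        + ∑ e ∈ Finset.Icc 1 d, ∑ j ∈ Finset.univ.erase i,
          C i j e * (hbar - (α j - α i) / (e : F))⁻¹ *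
            ∑ d' ∈ Finset.range (d - e + 1),
              expCoeff f ((α j - α i) / (e : F)) d' *
                Z ((α j - α i) / (e : F)) j (d - e - d') := by rw [hA]
end
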